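/- Fix N, p ≥ 1 and β ∈ ℝ. For k ∈ ℕ and i : Fin k → (Fin N)^p let Z(k,i) = Σ_{σ : Fin N → {−1,1}} exp( β Σ_{ν=1}^k σ(i_ν(1))⋯σ(i_ν(p)) ) and let ω_{k,i} denote the corresponding Gibbs average. Define F(λ) = Σ_{k=0}^∞ e^{−λ}λ^k/k! · N^{−pk} Σ_i ln Z(k,i). Then F is differentiable at every λ > 0 and F′(λ) = ln cosh β + Σ_{k=0}^∞ e^{−λ}λ^k/k! · N^{−pk} Σ_i [ N^{−p} Σ_{i₀ ∈ (Fin N)^p} ln( 1 + tanh β · ω_{k,i}( σ(i₀(1))⋯σ(i₀(p)) ) ) ]. In words: the derivative of the quenched pressure with respect to the Poisson mean equals ln cosh β plus the quenched average of ln(1 + θ ω(σ_{i₀^1}⋯σ_{i₀^p})) over a fresh uniform index p-tuple. -/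

import Mathlib

/-- Spin value (±1) of a Boolean; configurations on N sites are `Fin N → Bool`. -/
noncomputable def spin (b : Bool) : ℝ := if b then 1 else -1

/-- Partition function of the diluted p-spin Hamiltonian with k interaction terms and
index family i. -/
noncomputable def Zdil (N p : ℕ) (β : ℝ) (k : ℕ) (i : Fin k → Fin p → Fin N) : ℝ :=
  ∑ σ : Fin N → Bool, Real.exp (β * ∑ ν : Fin k, ∏ l : Fin p, spin (σ (i ν l)))

/-- Gibbs average of an observable g for the diluted p-spin Hamiltonian. -/
noncomputable def gibbs (N p : ℕ) (β : ℝ) (k : ℕ) (i : Fin k → Fin p → Fin N)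
    (g : (Fin N → Bool) → ℝ) : ℝ :=
  (∑ σ : Fin N → Bool,
      g σ * Real.exp (β * ∑ ν : Fin k, ∏ l : Fin p, spin (σ (i ν l)))) / Zdil N p β k i

/-- Quenched expectation at Poisson mean λ: Poisson(λ) number of interaction terms with
independent uniformly distributed index p-tuples. -/
noncomputable def quenched (N p : ℕ) (lam : ℝ)
    (f : (k : ℕ) → (Fin k → Fin p → Fin N) → ℝ) : ℝ :=
  ∑' k : ℕ, Real.exp (-lam) * lam ^ k / (Nat.factorial k : ℝ) *
    ((1 / (N : ℝ) ^ (p * k)) * ∑ i : Fin k → Fin p → Fin N, f k i)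

namespace QPD

lemma spin_pm (b : Bool) : spin b = 1 ∨ spin b = -1 := by
  cases b <;> simp [spin]

lemma prodspin_pm {N p : ℕ} (σ : Fin N → Bool) (i₀ : Fin p → Fin N) :
    (∏ l : Fin p, spin (σ (i₀ l))) = 1 ∨ (∏ l : Fin p, spin (σ (i₀ l))) = -1 := by
  rw [← mul_self_eq_one_iff, ← Finset.prod_mul_distrib]
  apply Finset.prod_eq_one
  intro l _
  rcases spin_pm (σ (i₀ l)) with h | h <;> rw [h] <;> norm_num

lemma abs_prodspin_le {N p : ℕ} (σ : Fin N → Bool) (i₀ : Fin p → Fin N) :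
    |∏ l : Fin p, spin (σ (i₀ l))| = 1 := by
  rcases prodspin_pm σ i₀ with h | h <;> rw [h] <;> norm_num

lemma exp_mul_pm (β s : ℝ) (hs : s = 1 ∨ s = -1) :
    Real.exp (β * s) = Real.cosh β * (1 + Real.tanh β * s) := by
  have hc : Real.cosh β ≠ 0 := (Real.cosh_pos β).ne'
  have hst : Real.cosh β * Real.tanh β = Real.sinh β := by
    rw [Real.tanh_eq_sinh_div_cosh]; field_simp
  rcases hs with h | h <;> subst h
  · rw [mul_one, mul_add, mul_one, mul_one, hst, Real.cosh_add_sinh]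
  · rw [mul_neg_one, mul_neg_one, ← sub_eq_add_neg, mul_sub, mul_one, hst,
      Real.cosh_sub_sinh]

lemma Zdil_pos (N p : ℕ) (β : ℝ) (k : ℕ) (i : Fin k → Fin p → Fin N) :
    0 < Zdil N p β k i :=
  Finset.sum_pos (fun σ _ => Real.exp_pos _) Finset.univ_nonempty

lemma abs_gibbs_le (N p : ℕ) (β : ℝ) (k : ℕ) (i : Fin k → Fin p → Fin N)
    (i₀ : Fin p → Fin N) :
    |gibbs N p β k i (fun σ => ∏ l : Fin p, spin (σ (i₀ l)))| ≤ 1 := by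
  rw [gibbs, abs_div, abs_of_pos (Zdil_pos N p β k i),
    div_le_one (Zdil_pos N p β k i)]
  calc |∑ σ : Fin N → Bool, (∏ l : Fin p, spin (σ (i₀ l))) *
          Real.exp (β * ∑ ν : Fin k, ∏ l : Fin p, spin (σ (i ν l)))|
      ≤ ∑ σ : Fin N → Bool, |(∏ l : Fin p, spin (σ (i₀ l))) *
          Real.exp (β * ∑ ν : Fin k, ∏ l : Fin p, spin (σ (i ν l)))| :=
        Finset.abs_sum_le_sum_abs _ _
    _ = Zdil N p β k i := by
        apply Finset.sum_congr rfl
        intro σ _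
        rw [abs_mul, abs_prodspin_le, one_mul, abs_of_pos (Real.exp_pos _)]

lemma one_add_pos (N p : ℕ) (β : ℝ) (k : ℕ) (i : Fin k → Fin p → Fin N)
    (i₀ : Fin p → Fin N) :
    1 - |Real.tanh β| ≤ 1 + Real.tanh β *
      gibbs N p β k i (fun σ => ∏ l : Fin p, spin (σ (i₀ l))) := by
  have h := abs_gibbs_le N p β k i i₀
  have : |Real.tanh β * gibbs N p β k i (fun σ => ∏ l : Fin p, spin (σ (i₀ l)))|
      ≤ |Real.tanh β| := by
    rw [abs_mul]
    nlinarith [abs_nonneg (Real.tanh β)]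
  nlinarith [neg_abs_le (Real.tanh β * gibbs N p β k i (fun σ => ∏ l : Fin p, spin (σ (i₀ l))))]

lemma tanh_abs_lt_one (β : ℝ) : |Real.tanh β| < 1 := by
  rw [Real.tanh_eq_sinh_div_cosh, abs_div, abs_of_pos (Real.cosh_pos β),
    div_lt_one (Real.cosh_pos β), abs_lt]
  constructor <;>
    nlinarith [Real.cosh_add_sinh β, Real.cosh_sub_sinh β, Real.exp_pos β, Real.exp_pos (-β)]

lemma Zdil_cons (N p : ℕ) (β : ℝ) (k : ℕ) (i : Fin k → Fin p → Fin N)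
    (i₀ : Fin p → Fin N) :
    Zdil N p β (k + 1) (Fin.cons i₀ i) =
      Real.cosh β * (Zdil N p β k i *
        (1 + Real.tanh β * gibbs N p β k i (fun σ => ∏ l : Fin p, spin (σ (i₀ l))))) := by
  have hZ := (Zdil_pos N p β k i).ne'
  have key : Zdil N p β (k + 1) (Fin.cons i₀ i) =
      Real.cosh β * (Zdil N p β k i + Real.tanh β *
        ∑ σ : Fin N → Bool, (∏ l : Fin p, spin (σ (i₀ l))) *
          Real.exp (β * ∑ ν : Fin k, ∏ l : Fin p, spin (σ (i ν l)))) := by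
    have step : ∀ σ : Fin N → Bool,
        Real.exp (β * ∑ ν : Fin (k + 1), ∏ l : Fin p, spin (σ ((Fin.cons i₀ i : Fin (k+1) → Fin p → Fin N) ν l))) =
        Real.cosh β * (Real.exp (β * ∑ ν : Fin k, ∏ l : Fin p, spin (σ (i ν l))) +
          Real.tanh β * ((∏ l : Fin p, spin (σ (i₀ l))) *
            Real.exp (β * ∑ ν : Fin k, ∏ l : Fin p, spin (σ (i ν l))))) := by
      intro σ
      rw [Fin.sum_univ_succ]
      simp only [Fin.cons_zero, Fin.cons_succ]
      rw [mul_add, Real.exp_add, exp_mul_pm β _ (prodspin_pm σ i₀)]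
      ring
    rw [Zdil, Finset.sum_congr rfl (fun σ _ => step σ), ← Finset.mul_sum,
      Finset.sum_add_distrib, ← Finset.mul_sum, Zdil]
  rw [key, gibbs]
  field_simp

lemma log_Zdil_cons (N p : ℕ) (hN : 1 ≤ N) (β : ℝ) (k : ℕ) (i : Fin k → Fin p → Fin N)
    (i₀ : Fin p → Fin N) :
    Real.log (Zdil N p β (k + 1) (Fin.cons i₀ i)) =
      Real.log (Real.cosh β) + Real.log (Zdil N p β k i) +
      Real.log (1 + Real.tanh β * gibbs N p β k i (fun σ => ∏ l : Fin p, spin (σ (i₀ l)))) := by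
  have h1 : (0:ℝ) < 1 + Real.tanh β * gibbs N p β k i (fun σ => ∏ l : Fin p, spin (σ (i₀ l))) :=
    lt_of_lt_of_le (by linarith [tanh_abs_lt_one β]) (one_add_pos N p β k i i₀)
  rw [Zdil_cons, Real.log_mul (Real.cosh_pos β).ne'
      (mul_pos (Zdil_pos N p β k i) h1).ne',
    Real.log_mul (Zdil_pos N p β k i).ne' h1.ne', add_assoc]

noncomputable def a (N p : ℕ) (β : ℝ) (k : ℕ) : ℝ :=
  (1 / (N : ℝ) ^ (p * k)) * ∑ i : Fin k → Fin p → Fin N, Real.log (Zdil N p β k i)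

noncomputable def b (N p : ℕ) (β : ℝ) (k : ℕ) : ℝ :=
  (1 / (N : ℝ) ^ (p * k)) * ∑ i : Fin k → Fin p → Fin N,
    (1 / (N : ℝ) ^ p) * ∑ i₀ : Fin p → Fin N,
      Real.log (1 + Real.tanh β * gibbs N p β k i (fun σ => ∏ l : Fin p, spin (σ (i₀ l))))

lemma abs_log_Zdil (N p : ℕ) (β : ℝ) (k : ℕ) (i : Fin k → Fin p → Fin N) :
    |Real.log (Zdil N p β k i)| ≤ N * Real.log 2 + |β| * k := by
  have habs : ∀ σ : Fin N → Bool,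
      |β * ∑ ν : Fin k, ∏ l : Fin p, spin (σ (i ν l))| ≤ |β| * k := by
    intro σ
    rw [abs_mul]
    gcongr
    calc |∑ ν : Fin k, ∏ l : Fin p, spin (σ (i ν l))|
        ≤ ∑ ν : Fin k, |∏ l : Fin p, spin (σ (i ν l))| := Finset.abs_sum_le_sum_abs _ _
      _ = k := by simp [abs_prodspin_le]
  have hcard : (Fintype.card (Fin N → Bool) : ℝ) = 2 ^ N := by
    simp [Fintype.card_fun]
  have hub : Zdil N p β k i ≤ 2 ^ N * Real.exp (|β| * k) := by
    rw [Zdil]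
    calc (∑ σ : Fin N → Bool, Real.exp (β * ∑ ν : Fin k, ∏ l : Fin p, spin (σ (i ν l))))
        ≤ ∑ _σ : Fin N → Bool, Real.exp (|β| * k) := by
          apply Finset.sum_le_sum
          intro σ _
          exact Real.exp_le_exp.2 (le_trans (le_abs_self _) (habs σ))
      _ = 2 ^ N * Real.exp (|β| * k) := by
          rw [Finset.sum_const, Finset.card_univ, nsmul_eq_mul, hcard]
  have hlb : 2 ^ N * Real.exp (-(|β| * k)) ≤ Zdil N p β k i := by
    rw [Zdil]
    calc (2:ℝ) ^ N * Real.exp (-(|β| * k))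
        = ∑ _σ : Fin N → Bool, Real.exp (-(|β| * k)) := by
          rw [Finset.sum_const, Finset.card_univ, nsmul_eq_mul, hcard]
      _ ≤ ∑ σ : Fin N → Bool, Real.exp (β * ∑ ν : Fin k, ∏ l : Fin p, spin (σ (i ν l))) := by
          apply Finset.sum_le_sum
          intro σ _
          exact Real.exp_le_exp.2 (neg_le_of_abs_le (habs σ))
  have h2 : (0:ℝ) < 2 ^ N := by positivity
  have hβk : (0:ℝ) ≤ |β| * k := by positivity
  have hlog2 : (0:ℝ) ≤ N * Real.log 2 := by positivity
  have e1 : Real.log (2 ^ N * Real.exp (-(|β| * k))) = N * Real.log 2 - |β| * k := by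
    rw [Real.log_mul h2.ne' (Real.exp_pos _).ne', Real.log_pow, Real.log_exp]
    push_cast
    try ring
  have e2 : Real.log (2 ^ N * Real.exp (|β| * k)) = N * Real.log 2 + |β| * k := by
    rw [Real.log_mul h2.ne' (Real.exp_pos _).ne', Real.log_pow, Real.log_exp]
  have l1 := Real.log_le_log (by positivity) hlb
  have l2 := Real.log_le_log (Zdil_pos N p β k i) hub
  rw [abs_le]
  constructor <;> linarith

lemma card_idx (N p k : ℕ) :
    (Fintype.card (Fin k → Fin p → Fin N) : ℝ) = (N : ℝ) ^ (p * k) := by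
  simp [Fintype.card_fun, pow_mul]

lemma Npk_pos (N p : ℕ) (hN : 1 ≤ N) (k : ℕ) : (0:ℝ) < (N : ℝ) ^ (p * k) := by
  have : (0:ℝ) < (N : ℝ) := by exact_mod_cast hN
  positivity

lemma abs_a_le (N p : ℕ) (hN : 1 ≤ N) (β : ℝ) (k : ℕ) :
    |a N p β k| ≤ N * Real.log 2 + |β| * k := by
  have hpos := Npk_pos N p hN k
  rw [a, abs_mul, abs_of_pos (by positivity : (0:ℝ) < 1 / (N : ℝ) ^ (p * k))]
  rw [div_mul_eq_mul_div, one_mul, div_le_iff₀ hpos]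
  calc |∑ i : Fin k → Fin p → Fin N, Real.log (Zdil N p β k i)|
      ≤ ∑ i : Fin k → Fin p → Fin N, |Real.log (Zdil N p β k i)| :=
        Finset.abs_sum_le_sum_abs _ _
    _ ≤ ∑ _i : Fin k → Fin p → Fin N, (N * Real.log 2 + |β| * k) :=
        Finset.sum_le_sum fun i _ => abs_log_Zdil N p β k i
    _ = (N * Real.log 2 + |β| * k) * (N : ℝ) ^ (p * k) := by
        rw [Finset.sum_const, Finset.card_univ, nsmul_eq_mul, card_idx, mul_comm]

lemma abs_log_one_add_le (N p : ℕ) (β : ℝ) (k : ℕ) (i : Fin k → Fin p → Fin N)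
    (i₀ : Fin p → Fin N) :
    |Real.log (1 + Real.tanh β *
      gibbs N p β k i (fun σ => ∏ l : Fin p, spin (σ (i₀ l))))| ≤
      |Real.log (1 - |Real.tanh β|)| + Real.log 2 := by
  set x := 1 + Real.tanh β * gibbs N p β k i (fun σ => ∏ l : Fin p, spin (σ (i₀ l))) with hx
  have h1 : 1 - |Real.tanh β| ≤ x := one_add_pos N p β k i i₀
  have hm : (0:ℝ) < 1 - |Real.tanh β| := by linarith [tanh_abs_lt_one β]
  have h2 : x ≤ 2 := by
    have := abs_gibbs_le N p β k i i₀
    have habs : |Real.tanh β * gibbs N p β k i (fun σ => ∏ l : Fin p, spin (σ (i₀ l)))| ≤ 1 := by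
      rw [abs_mul]
      nlinarith [abs_nonneg (Real.tanh β), tanh_abs_lt_one β]
    have := le_abs_self (Real.tanh β * gibbs N p β k i (fun σ => ∏ l : Fin p, spin (σ (i₀ l))))
    simp only [hx]
    linarith
  have hlog2 : (0:ℝ) ≤ Real.log 2 := Real.log_nonneg (by norm_num)
  rw [abs_le]
  constructor
  · calc -(|Real.log (1 - |Real.tanh β|)| + Real.log 2)
        ≤ -|Real.log (1 - |Real.tanh β|)| := by linarith
      _ ≤ Real.log (1 - |Real.tanh β|) := neg_abs_le _
      _ ≤ Real.log x := Real.log_le_log hm h1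
  · calc Real.log x ≤ Real.log 2 := Real.log_le_log (lt_of_lt_of_le hm h1) h2
      _ ≤ |Real.log (1 - |Real.tanh β|)| + Real.log 2 := by
          linarith [abs_nonneg (Real.log (1 - |Real.tanh β|))]

lemma abs_b_le (N p : ℕ) (hN : 1 ≤ N) (β : ℝ) (k : ℕ) :
    |b N p β k| ≤ |Real.log (1 - |Real.tanh β|)| + Real.log 2 := by
  set E := |Real.log (1 - |Real.tanh β|)| + Real.log 2 with hE
  have hpos := Npk_pos N p hN k
  have hppos : (0:ℝ) < (N : ℝ) ^ p := by
    have : (0:ℝ) < (N : ℝ) := by exact_mod_cast hN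
    positivity
  have hinner : ∀ i : Fin k → Fin p → Fin N,
      |(1 / (N : ℝ) ^ p) * ∑ i₀ : Fin p → Fin N,
        Real.log (1 + Real.tanh β * gibbs N p β k i
          (fun σ => ∏ l : Fin p, spin (σ (i₀ l))))| ≤ E := by
    intro i
    rw [abs_mul, abs_of_pos (by positivity : (0:ℝ) < 1 / (N : ℝ) ^ p),
      div_mul_eq_mul_div, one_mul, div_le_iff₀ hppos]
    calc |∑ i₀ : Fin p → Fin N, Real.log (1 + Real.tanh β * gibbs N p β k i
            (fun σ => ∏ l : Fin p, spin (σ (i₀ l))))|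
        ≤ ∑ i₀ : Fin p → Fin N, |Real.log (1 + Real.tanh β * gibbs N p β k i
            (fun σ => ∏ l : Fin p, spin (σ (i₀ l))))| := Finset.abs_sum_le_sum_abs _ _
      _ ≤ ∑ _i₀ : Fin p → Fin N, E :=
          Finset.sum_le_sum fun i₀ _ => abs_log_one_add_le N p β k i i₀
      _ = E * (N : ℝ) ^ p := by
          rw [Finset.sum_const, Finset.card_univ, nsmul_eq_mul, Fintype.card_fun]
          simp [mul_comm]
  rw [b, abs_mul, abs_of_pos (by positivity : (0:ℝ) < 1 / (N : ℝ) ^ (p * k)),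
    div_mul_eq_mul_div, one_mul, div_le_iff₀ hpos]
  calc |∑ i : Fin k → Fin p → Fin N, (1 / (N : ℝ) ^ p) * ∑ i₀ : Fin p → Fin N,
          Real.log (1 + Real.tanh β * gibbs N p β k i
            (fun σ => ∏ l : Fin p, spin (σ (i₀ l))))|
      ≤ ∑ i : Fin k → Fin p → Fin N, |(1 / (N : ℝ) ^ p) * ∑ i₀ : Fin p → Fin N,
          Real.log (1 + Real.tanh β * gibbs N p β k i
            (fun σ => ∏ l : Fin p, spin (σ (i₀ l))))| := Finset.abs_sum_le_sum_abs _ _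
    _ ≤ ∑ _i : Fin k → Fin p → Fin N, E := Finset.sum_le_sum fun i _ => hinner i
    _ = E * (N : ℝ) ^ (p * k) := by
        rw [Finset.sum_const, Finset.card_univ, nsmul_eq_mul, card_idx, mul_comm]

lemma a_succ (N p : ℕ) (hN : 1 ≤ N) (β : ℝ) (k : ℕ) :
    a N p β (k + 1) = Real.log (Real.cosh β) + a N p β k + b N p β k := by
  classical
  have hNpos : (0:ℝ) < (N : ℝ) := by exact_mod_cast hN
  set L := Real.log (Real.cosh β) with hL
  set A : (Fin k → Fin p → Fin N) → ℝ := fun i => Real.log (Zdil N p β k i) with hA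
  set W : (Fin k → Fin p → Fin N) → (Fin p → Fin N) → ℝ := fun i i₀ =>
    Real.log (1 + Real.tanh β * gibbs N p β k i (fun σ => ∏ l : Fin p, spin (σ (i₀ l))))
    with hW
  have hsum : (∑ i' : Fin (k + 1) → Fin p → Fin N, Real.log (Zdil N p β (k + 1) i'))
      = ∑ i₀ : Fin p → Fin N, ∑ i : Fin k → Fin p → Fin N, (L + A i + W i i₀) := by
    rw [← Equiv.sum_comp (Fin.consEquiv fun _ : Fin (k + 1) => (Fin p → Fin N))
      (fun i' => Real.log (Zdil N p β (k + 1) i')), Fintype.sum_prod_type]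
    refine Finset.sum_congr rfl fun i₀ _ => Finset.sum_congr rfl fun i _ => ?_
    exact log_Zdil_cons N p hN β k i i₀
  have hsplit : (∑ i₀ : Fin p → Fin N, ∑ i : Fin k → Fin p → Fin N, (L + A i + W i i₀))
      = (N:ℝ) ^ p * ((N:ℝ) ^ (p * k) * L + ∑ i : Fin k → Fin p → Fin N, A i)
        + ∑ i : Fin k → Fin p → Fin N, ∑ i₀ : Fin p → Fin N, W i i₀ := by
    have inner : ∀ i₀ : Fin p → Fin N,
        (∑ i : Fin k → Fin p → Fin N, (L + A i + W i i₀))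
        = ((N:ℝ) ^ (p * k) * L + ∑ i : Fin k → Fin p → Fin N, A i)
          + ∑ i : Fin k → Fin p → Fin N, W i i₀ := by
      intro i₀
      rw [Finset.sum_add_distrib, Finset.sum_add_distrib, Finset.sum_const,
        Finset.card_univ, nsmul_eq_mul, card_idx]
    rw [Finset.sum_congr rfl fun i₀ _ => inner i₀, Finset.sum_add_distrib,
      Finset.sum_const, Finset.card_univ, nsmul_eq_mul, Finset.sum_comm]
    have : (Fintype.card (Fin p → Fin N) : ℝ) = (N:ℝ) ^ p := by
      simp [Fintype.card_fun]
    rw [this]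
  have hb : b N p β k = (1 / (N:ℝ) ^ (p * k)) * ((1 / (N:ℝ) ^ p) *
      ∑ i : Fin k → Fin p → Fin N, ∑ i₀ : Fin p → Fin N, W i i₀) := by
    rw [b, ← Finset.mul_sum]
  have hpow : (N:ℝ) ^ (p * (k + 1)) = (N:ℝ) ^ p * (N:ℝ) ^ (p * k) := by
    rw [← pow_add]
    ring_nf
  rw [a, hsum, hsplit, a, hb, hpow]
  have h1 : ((N:ℝ) ^ p) ≠ 0 := by positivity
  have h2 : ((N:ℝ) ^ (p * k)) ≠ 0 := by positivity
  field_simp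
  ring

section Analysis

variable (N p : ℕ) (β : ℝ)

/-- The Poisson term. -/
noncomputable def f (k : ℕ) (l : ℝ) : ℝ :=
  Real.exp (-l) * l ^ k / (Nat.factorial k : ℝ) * a N p β k

/-- Its derivative. -/
noncomputable def d (k : ℕ) (y : ℝ) : ℝ :=
  ((-Real.exp (-y)) * y ^ k + Real.exp (-y) * (k * y ^ (k - 1))) / (Nat.factorial k : ℝ)
    * a N p β k

lemma hasDerivAt_f (k : ℕ) (y : ℝ) : HasDerivAt (f N p β k) (d N p β k y) y := by
  have h1 : HasDerivAt (fun l : ℝ => Real.exp (-l)) (Real.exp (-y) * (-1)) y :=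
    (hasDerivAt_id y).neg.exp
  have h2 : HasDerivAt (fun l : ℝ => l ^ k) ((k : ℝ) * y ^ (k - 1)) y := hasDerivAt_pow k y
  have h3 := ((h1.mul h2).div_const (Nat.factorial k : ℝ)).mul_const (a N p β k)
  refine h3.congr_deriv ?_
  simp only [d]
  ring

lemma two_pow_bound (k : ℕ) : ((k : ℝ) + 1) ≤ 2 ^ k := by
  have h : k + 1 ≤ 2 ^ k := Nat.lt_two_pow_self
  exact_mod_cast h

lemma abs_d_le (hN : 1 ≤ N) (R : ℝ) (hR : 1 ≤ R) (k : ℕ) (y : ℝ) (hy : y ∈ Set.Ioo 0 R) :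
    |d N p β k y| ≤ (N * Real.log 2 + |β| * k) * (((k : ℝ) + 1) * R ^ k)
      / (Nat.factorial k : ℝ) := by
  obtain ⟨hy0, hyR⟩ := hy
  have hfac : (0:ℝ) < (Nat.factorial k : ℝ) := by exact_mod_cast k.factorial_pos
  have he : Real.exp (-y) ≤ 1 := Real.exp_le_one_iff.2 (by linarith)
  have he0 : (0:ℝ) < Real.exp (-y) := Real.exp_pos _
  have hyk : y ^ k ≤ R ^ k := pow_le_pow_left₀ hy0.le hyR.le k
  have hyk1 : y ^ (k - 1) ≤ R ^ k :=
    le_trans (pow_le_pow_left₀ hy0.le hyR.le (k - 1)) (pow_le_pow_right₀ hR (Nat.sub_le k 1))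
  have hy0k : (0:ℝ) ≤ y ^ k := by positivity
  have hy0k1 : (0:ℝ) ≤ y ^ (k - 1) := by positivity
  rw [d, abs_mul, abs_div, abs_of_pos hfac]
  have hnum : |(-Real.exp (-y)) * y ^ k + Real.exp (-y) * (k * y ^ (k - 1))|
      ≤ ((k : ℝ) + 1) * R ^ k := by
    calc |(-Real.exp (-y)) * y ^ k + Real.exp (-y) * (k * y ^ (k - 1))|
        ≤ |(-Real.exp (-y)) * y ^ k| + |Real.exp (-y) * (k * y ^ (k - 1))| := abs_add_le _ _
      _ = Real.exp (-y) * y ^ k + Real.exp (-y) * (k * y ^ (k - 1)) := by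
          rw [abs_mul, abs_mul, abs_neg, abs_of_pos he0, abs_of_nonneg hy0k,
            abs_of_nonneg (by positivity : (0:ℝ) ≤ (k:ℝ) * y ^ (k - 1))]
      _ ≤ 1 * R ^ k + 1 * ((k : ℝ) * R ^ k) := by
          have hk0 : (0:ℝ) ≤ (k : ℝ) := by positivity
          gcongr
      _ = ((k : ℝ) + 1) * R ^ k := by ring
  have hak := abs_a_le N p hN β k
  have hC : (0:ℝ) ≤ N * Real.log 2 + |β| * k := by positivity
  calc |(-Real.exp (-y)) * y ^ k + Real.exp (-y) * ((k:ℝ) * y ^ (k - 1))|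
        / (Nat.factorial k : ℝ) * |a N p β k|
      ≤ (((k : ℝ) + 1) * R ^ k) / (Nat.factorial k : ℝ) * (N * Real.log 2 + |β| * k) := by
        gcongr <;> first | exact abs_nonneg _ | skip
    _ = (N * Real.log 2 + |β| * k) * (((k : ℝ) + 1) * R ^ k) / (Nat.factorial k : ℝ) := by
        ring

lemma summable_u (R : ℝ) (hR : 1 ≤ R) :
    Summable (fun k : ℕ => (N * Real.log 2 + |β| * k) * (((k : ℝ) + 1) * R ^ k)
      / (Nat.factorial k : ℝ)) := by
  set C := (N : ℝ) * Real.log 2 with hC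
  set D := |β| with hD
  have hC0 : 0 ≤ C := by positivity
  have hD0 : 0 ≤ D := abs_nonneg β
  have hR0 : (0:ℝ) ≤ R := by linarith
  refine Summable.of_nonneg_of_le (fun k => ?_) (fun k => ?_)
    ((Real.summable_pow_div_factorial (4 * R)).mul_left (C + D))
  · have hfac : (0:ℝ) < (Nat.factorial k : ℝ) := by exact_mod_cast k.factorial_pos
    positivity
  · have hfac : (0:ℝ) < (Nat.factorial k : ℝ) := by exact_mod_cast k.factorial_pos
    have h1 : C + D * k ≤ (C + D) * ((k:ℝ) + 1) := by nlinarith [Nat.cast_nonneg (α := ℝ) k]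
    have h2 : ((k:ℝ) + 1) ≤ 2 ^ k := two_pow_bound k
    have hRk : (0:ℝ) ≤ R ^ k := by positivity
    have h4 : (4 * R) ^ k = 2 ^ k * (2 ^ k * R ^ k) := by
      rw [show (4:ℝ) * R = 2 * (2 * R) by ring, mul_pow, mul_pow]
    have hk1 : (0:ℝ) ≤ (k:ℝ) + 1 := by positivity
    have key : (C + D * k) * (((k:ℝ) + 1) * R ^ k) ≤ (C + D) * (4 * R) ^ k := by
      rw [h4]
      calc (C + D * k) * (((k:ℝ) + 1) * R ^ k)
          ≤ ((C + D) * ((k:ℝ) + 1)) * (((k:ℝ) + 1) * R ^ k) :=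
            mul_le_mul_of_nonneg_right h1 (by positivity)
        _ ≤ ((C + D) * 2 ^ k) * (2 ^ k * R ^ k) := by
            have := mul_le_mul h2 (mul_le_mul_of_nonneg_right h2 hRk) (by positivity)
              (by positivity)
            nlinarith [this, hC0, hD0]
        _ = (C + D) * (2 ^ k * (2 ^ k * R ^ k)) := by ring
    calc (C + D * k) * (((k:ℝ) + 1) * R ^ k) / (Nat.factorial k : ℝ)
        ≤ (C + D) * (4 * R) ^ k / (Nat.factorial k : ℝ) := by gcongr
      _ = (C + D) * ((4 * R) ^ k / (Nat.factorial k : ℝ)) := by ring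

lemma summable_f (hN : 1 ≤ N) (l : ℝ) (hl : 0 ≤ l) : Summable (fun k => f N p β k l) := by
  set C := (N : ℝ) * Real.log 2 with hC
  set D := |β| with hD
  have hC0 : 0 ≤ C := by positivity
  have hD0 : 0 ≤ D := abs_nonneg β
  apply Summable.of_norm_bounded
    (g := fun k : ℕ => (C + D) * ((2 * l) ^ k / (Nat.factorial k : ℝ)))
    ((Real.summable_pow_div_factorial (2 * l)).mul_left _)
  intro k
  have hfac : (0:ℝ) < (Nat.factorial k : ℝ) := by exact_mod_cast k.factorial_pos
  rw [Real.norm_eq_abs, f, abs_mul, abs_div]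
  have he : |Real.exp (-l) * l ^ k| ≤ l ^ k := by
    rw [abs_mul, abs_of_pos (Real.exp_pos _), abs_of_nonneg (by positivity : (0:ℝ) ≤ l ^ k)]
    have : Real.exp (-l) ≤ 1 := Real.exp_le_one_iff.2 (by linarith)
    nlinarith [pow_nonneg hl k]
  have hak : |a N p β k| ≤ C + D * k := abs_a_le N p hN β k
  have h1 : C + D * k ≤ (C + D) * 2 ^ k := by
    have := two_pow_bound k
    nlinarith [Nat.cast_nonneg (α := ℝ) k]
  calc |Real.exp (-l) * l ^ k| / |(Nat.factorial k : ℝ)| * |a N p β k|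
      ≤ l ^ k / (Nat.factorial k : ℝ) * (C + D * k) := by
        rw [abs_of_pos hfac]
        gcongr <;> first | exact abs_nonneg _ | skip
    _ ≤ l ^ k / (Nat.factorial k : ℝ) * ((C + D) * 2 ^ k) := by
        gcongr <;> positivity
    _ = (C + D) * ((2 * l) ^ k / (Nat.factorial k : ℝ)) := by
        rw [mul_pow]
        ring

end Analysis

end QPD

/-- The derivative of the quenched pressure with respect to the Poisson mean equals
ln cosh β plus the quenched average of ln(1 + θ ω(σ_{i₀¹}⋯σ_{i₀^p})) over a fresh
uniform index p-tuple i₀. -/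
theorem quenched_pressure_deriv (N p : ℕ) (hN : 1 ≤ N) (hp : 1 ≤ p) (β : ℝ)
    (lam : ℝ) (hlam : 0 < lam) :
    HasDerivAt (fun l : ℝ => quenched N p l (fun k i => Real.log (Zdil N p β k i)))
      (Real.log (Real.cosh β) +
        quenched N p lam (fun k i =>
          (1 / (N : ℝ) ^ p) * ∑ i₀ : Fin p → Fin N,
            Real.log (1 + Real.tanh β *
              gibbs N p β k i (fun σ => ∏ l : Fin p, spin (σ (i₀ l))))))
      lam := by
  classical
  set R := lam + 1 with hRdef
  have hR1 : (1:ℝ) ≤ R := by simp only [hRdef]; linarith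
  have hmem : lam ∈ Set.Ioo (0:ℝ) R := ⟨hlam, by simp only [hRdef]; linarith⟩
  have hu := QPD.summable_u N β R hR1
  have hf0 : Summable (fun k => QPD.f N p β k lam) := QPD.summable_f N p β hN lam hlam.le
  have main : HasDerivAt (fun l : ℝ => ∑' k : ℕ, QPD.f N p β k l)
      (∑' k : ℕ, QPD.d N p β k lam) lam := by
    refine hasDerivAt_tsum_of_isPreconnected hu isOpen_Ioo
      (convex_Ioo (0:ℝ) R).isPreconnected
      (fun k y _ => QPD.hasDerivAt_f N p β k y) (fun k y hy => ?_) hmem hf0 hmem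
    rw [Real.norm_eq_abs]
    exact QPD.abs_d_le N p β hN R hR1 k y hy
  have hFeq : (fun l : ℝ => quenched N p l (fun k i => Real.log (Zdil N p β k i)))
      = (fun l : ℝ => ∑' k : ℕ, QPD.f N p β k l) := by
    funext l
    simp only [quenched, QPD.f, QPD.a]
  -- notation
  set L := Real.log (Real.cosh β) with hL
  set w : ℕ → ℝ := fun k => Real.exp (-lam) * lam ^ k / (Nat.factorial k : ℝ) with hw
  have hw_nonneg : ∀ k, 0 ≤ w k := by
    intro k
    have : (0:ℝ) < (Nat.factorial k : ℝ) := by exact_mod_cast k.factorial_pos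
    simp only [hw]
    positivity
  have hsumw : Summable w := by
    have := (Real.summable_pow_div_factorial lam).mul_left (Real.exp (-lam))
    refine this.congr fun k => ?_
    simp only [hw]
    ring
  have htsumw : (∑' k : ℕ, w k) = 1 := by
    have h2 : (∑' k : ℕ, lam ^ k / (Nat.factorial k : ℝ)) = Real.exp lam := by
      rw [Real.exp_eq_exp_ℝ, NormedSpace.exp_eq_tsum_div]
    have h1 : (∑' k : ℕ, w k) = Real.exp (-lam) * ∑' k : ℕ, lam ^ k / (Nat.factorial k : ℝ) := by
      rw [← tsum_mul_left]
      exact tsum_congr fun k => by simp only [hw]; ring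
    rw [h1, h2, ← Real.exp_add]
    norm_num
  have hd_sum : Summable (fun k => QPD.d N p β k lam) := by
    refine Summable.of_norm_bounded hu fun k => ?_
    rw [Real.norm_eq_abs]
    exact QPD.abs_d_le N p β hN R hR1 k lam hmem
  have ht2 : Summable (fun k => w k * QPD.a N p β k) := by
    refine hf0.congr fun k => ?_
    simp only [QPD.f, hw]
  set T1 : ℕ → ℝ := fun k =>
    Real.exp (-lam) * ((k : ℝ) * lam ^ (k - 1)) / (Nat.factorial k : ℝ) * QPD.a N p β k
    with hT1
  have key : ∀ k, QPD.d N p β k lam = T1 k - w k * QPD.a N p β k := by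
    intro k
    simp only [QPD.d, hT1, hw]
    ring
  have hT1sum : Summable T1 := by
    have : T1 = fun k => QPD.d N p β k lam + w k * QPD.a N p β k := by
      funext k
      rw [key k]
      ring
    rw [this]
    exact hd_sum.add ht2
  have hwb : Summable (fun k => w k * QPD.b N p β k) := by
    set E := |Real.log (1 - |Real.tanh β|)| + Real.log 2 with hE
    refine Summable.of_norm_bounded
      (g := fun k : ℕ => E * (lam ^ k / (Nat.factorial k : ℝ)))
      ((Real.summable_pow_div_factorial lam).mul_left E) fun k => ?_
    have hfac : (0:ℝ) < (Nat.factorial k : ℝ) := by exact_mod_cast k.factorial_pos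
    have h1 : Real.exp (-lam) ≤ 1 := Real.exp_le_one_iff.2 (by linarith)
    have h2 := QPD.abs_b_le N p hN β k
    rw [Real.norm_eq_abs, abs_mul, abs_of_nonneg (hw_nonneg k)]
    calc w k * |QPD.b N p β k| ≤ w k * E := by
          have := hw_nonneg k
          exact mul_le_mul_of_nonneg_left h2 this
      _ ≤ (lam ^ k / (Nat.factorial k : ℝ)) * E := by
          have hlk : (0:ℝ) ≤ lam ^ k := by positivity
          have : w k ≤ lam ^ k / (Nat.factorial k : ℝ) := by
            simp only [hw]
            rw [div_le_div_iff₀ hfac hfac]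
            nlinarith [mul_le_mul_of_nonneg_right h1 (mul_nonneg hlk hfac.le)]
          have hE0 : 0 ≤ E := by
            have : (0:ℝ) ≤ Real.log 2 := Real.log_nonneg (by norm_num)
            simp only [hE]
            positivity
          exact mul_le_mul_of_nonneg_right this hE0
      _ = E * (lam ^ k / (Nat.factorial k : ℝ)) := by ring
  -- shifted sum
  have hterm : ∀ k : ℕ, T1 (k + 1) = w k * QPD.a N p β (k + 1) := by
    intro k
    simp only [hT1, hw, Nat.add_sub_cancel]
    have hfs : ((Nat.factorial (k + 1) : ℕ) : ℝ) = ((k : ℝ) + 1) * (Nat.factorial k : ℝ) := by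
      rw [Nat.factorial_succ]
      push_cast
      ring
    have hfac : (0:ℝ) < (Nat.factorial k : ℝ) := by exact_mod_cast k.factorial_pos
    rw [hfs]
    have hk1 : ((k : ℝ) + 1) ≠ 0 := by positivity
    push_cast
    field_simp
  have hshift_sum : Summable (fun k : ℕ => w k * QPD.a N p β (k + 1)) :=
    ((summable_nat_add_iff 1).2 hT1sum).congr fun k => hterm k
  have hT1shift : (∑' k : ℕ, T1 k) = ∑' k : ℕ, w k * QPD.a N p β (k + 1) := by
    rw [hT1sum.tsum_eq_zero_add]
    have h0 : T1 0 = 0 := by simp [hT1]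
    rw [h0, zero_add]
    exact tsum_congr fun k => hterm k
  -- final value computation
  have hval : (∑' k : ℕ, QPD.d N p β k lam) = L + ∑' k : ℕ, w k * QPD.b N p β k := by
    calc (∑' k : ℕ, QPD.d N p β k lam)
        = ∑' k : ℕ, (T1 k - w k * QPD.a N p β k) := tsum_congr key
      _ = (∑' k : ℕ, T1 k) - ∑' k : ℕ, w k * QPD.a N p β k := hT1sum.tsum_sub ht2
      _ = (∑' k : ℕ, w k * QPD.a N p β (k + 1)) - ∑' k : ℕ, w k * QPD.a N p β k := by
          rw [hT1shift]
      _ = ∑' k : ℕ, (w k * QPD.a N p β (k + 1) - w k * QPD.a N p β k) := by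
          exact (hshift_sum.tsum_sub ht2).symm
      _ = ∑' k : ℕ, (w k * L + w k * QPD.b N p β k) := by
          refine tsum_congr fun k => ?_
          rw [QPD.a_succ N p hN β k]
          ring
      _ = (∑' k : ℕ, w k * L) + ∑' k : ℕ, w k * QPD.b N p β k :=
          (hsumw.mul_right L).tsum_add hwb
      _ = L + ∑' k : ℕ, w k * QPD.b N p β k := by
          rw [tsum_mul_right, htsumw, one_mul]
  have hq : quenched N p lam (fun k i =>
      (1 / (N : ℝ) ^ p) * ∑ i₀ : Fin p → Fin N,
        Real.log (1 + Real.tanh β *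
          gibbs N p β k i (fun σ => ∏ l : Fin p, spin (σ (i₀ l)))))
      = ∑' k : ℕ, w k * QPD.b N p β k := by
    simp only [quenched, hw, QPD.b]
  rw [hFeq, hq, ← hval]
  exact main
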